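/- There is no ex-post equilibrium for the VAOV protocol: there do not exist strategy maps s_1, s_2 (from a party's own preference order to a full strategy) such that for every pair of preference orders, each s_k(≻_k) is a best response to s_{3−k}(≻_{3−k}) in the induced full-information game. -/
import Mathlib


/-- A strategy in the VAOV game: an offering rule and a response (accept?) rule. -/
abbrev NegStrat (α : Type*) := (Finset α → α) × (Finset α → α → Bool)

/-- The outcome of the VAOV game from the set `O` of available outcomes, where `S1`
is the strategy of the current proposer and `S2` that of the current responder. -/
noncomputable def play {α : Type*} [DecidableEq α] [Inhabited α]
    (S1 S2 : NegStrat α) (O : Finset α) : α :=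
  if O.card ≤ 1 then (if h : O.Nonempty then Classical.choose h else default)
  else if ho : S1.1 O ∈ O then
    (if S2.2 O (S1.1 O) = true then S1.1 O else play S2 S1 (O.erase (S1.1 O)))
  else default
termination_by O.card
decreasing_by exact Finset.card_erase_lt_of_mem ho

/-- A strategy always offers an available outcome. -/
def ValidStrat {α : Type*} (S : NegStrat α) : Prop :=
  ∀ O : Finset α, O.Nonempty → S.1 O ∈ O

/-- Outcome from a responder node: the outcome `o` is on the table in round set `O`,
the proposer plays `P` and the responder plays `R`. -/
noncomputable def respOut {α : Type*} [DecidableEq α] [Inhabited α]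
    (P R : NegStrat α) (O : Finset α) (o : α) : α :=
  if R.2 O o = true then o else play R P (O.erase o)

/-- `(S1, S2)` is a subgame perfect equilibrium of the VAOV game on `O` with rank
functions `r1`, `r2` (higher rank = more preferred): at every subgame (every
nonempty `O' ⊆ O`, with either player as proposer, and every responder node after
an offer `o ∈ O'`), no player can improve her outcome by a (valid) deviation. -/
def IsSPE {α : Type*} [DecidableEq α] [Inhabited α]
    (r1 r2 : α → ℕ) (O : Finset α) (S1 S2 : NegStrat α) : Prop :=
  ∀ O' : Finset α, O' ⊆ O → O'.Nonempty →
    ((∀ T1 : NegStrat α, ValidStrat T1 → r1 (play T1 S2 O') ≤ r1 (play S1 S2 O')) ∧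
     (∀ T2 : NegStrat α, ValidStrat T2 → r2 (play S1 T2 O') ≤ r2 (play S1 S2 O')) ∧
     (∀ T2 : NegStrat α, ValidStrat T2 → r2 (play T2 S1 O') ≤ r2 (play S2 S1 O')) ∧
     (∀ T1 : NegStrat α, ValidStrat T1 → r1 (play S2 T1 O') ≤ r1 (play S2 S1 O')) ∧
     (∀ o ∈ O',
       (∀ T2 : NegStrat α, ValidStrat T2 →
          r2 (respOut S1 T2 O' o) ≤ r2 (respOut S1 S2 O' o)) ∧
       (∀ T1 : NegStrat α, ValidStrat T1 →
          r1 (respOut T1 S2 O' o) ≤ r1 (respOut S1 S2 O' o)) ∧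
       (∀ T1 : NegStrat α, ValidStrat T1 →
          r1 (respOut S2 T1 O' o) ≤ r1 (respOut S2 S1 O' o)) ∧
       (∀ T2 : NegStrat α, ValidStrat T2 →
          r2 (respOut T2 S1 O' o) ≤ r2 (respOut S2 S1 O' o))))

/-- Threshold strategy: offer an element of `T` when possible, accept exactly offers in `T`. -/
noncomputable def gstrat (T : Finset (Fin 6)) : NegStrat (Fin 6) :=
  (fun O => if h : (O ∩ T).Nonempty then (O ∩ T).min' h
            else if h2 : O.Nonempty then O.min' h2 else 0,
   fun _ o => decide (o ∈ T))

lemma gstrat_valid (T : Finset (Fin 6)) : ValidStrat (gstrat T) := by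
  intro O hO
  simp only [gstrat]
  split_ifs with h
  · exact Finset.mem_of_mem_inter_left (Finset.min'_mem _ h)
  · exact Finset.min'_mem _ hO

lemma guarantee (T : Finset (Fin 6)) : ∀ n (O : Finset (Fin 6)), O.card = n → O.Nonempty →
    (∀ S : NegStrat (Fin 6), ValidStrat S → O.card + 1 ≤ 2 * (O ∩ T).card →
      play (gstrat T) S O ∈ T) ∧
    (∀ S : NegStrat (Fin 6), ValidStrat S → O.card ≤ 2 * (O ∩ T).card →
      play S (gstrat T) O ∈ T) := by
  intro n
  induction n using Nat.strong_induction_on with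
  | _ n IH =>
    intro O hcard hne
    have hcpos : 1 ≤ O.card := Finset.card_pos.mpr hne
    constructor
    · -- proposer
      intro S hS hcond
      have hTne : (O ∩ T).Nonempty := Finset.card_pos.mp (by omega)
      rw [play]
      by_cases hle : O.card ≤ 1
      · rw [if_pos hle, dif_pos hne]
        have h1 : O.card = 1 := le_antisymm hle hcpos
        obtain ⟨b, hb⟩ := hTne
        have hbO : b ∈ O := Finset.mem_of_mem_inter_left hb
        have hbT : b ∈ T := Finset.mem_of_mem_inter_right hb
        have hcO : Classical.choose hne ∈ O := Classical.choose_spec hne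
        have heq : Classical.choose hne = b := Finset.card_le_one.mp hle _ hcO _ hbO
        rw [heq]; exact hbT
      · rw [if_neg hle]
        have hoffer : (gstrat T).1 O = (O ∩ T).min' hTne := by
          simp only [gstrat, dif_pos hTne]
        have hmem : (gstrat T).1 O ∈ O ∩ T := by rw [hoffer]; exact Finset.min'_mem _ hTne
        have hmemO : (gstrat T).1 O ∈ O := Finset.mem_of_mem_inter_left hmem
        rw [dif_pos hmemO]
        by_cases hacc : S.2 O ((gstrat T).1 O) = true
        · rw [if_pos hacc]; exact Finset.mem_of_mem_inter_right hmem
        · rw [if_neg hacc]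
          set a := (gstrat T).1 O with ha
          have hcard' : (O.erase a).card = O.card - 1 := Finset.card_erase_of_mem hmemO
          have hne' : (O.erase a).Nonempty := Finset.card_pos.mp (by omega)
          have hint : (O.erase a) ∩ T = (O ∩ T).erase a := Finset.erase_inter a O T
          have hcint : ((O.erase a) ∩ T).card = (O ∩ T).card - 1 := by
            rw [hint, Finset.card_erase_of_mem hmem]
          have hTc : 1 ≤ (O ∩ T).card := Finset.card_pos.mpr hTne
          exact (IH (O.erase a).card (by omega) (O.erase a) rfl hne').2 S hS (by omega)
    · -- responder
      intro S hS hcond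
      rw [play]
      by_cases hle : O.card ≤ 1
      · rw [if_pos hle, dif_pos hne]
        have h1 : O.card = 1 := le_antisymm hle hcpos
        have hTne : (O ∩ T).Nonempty := Finset.card_pos.mp (by omega)
        obtain ⟨b, hb⟩ := hTne
        have hbO : b ∈ O := Finset.mem_of_mem_inter_left hb
        have hbT : b ∈ T := Finset.mem_of_mem_inter_right hb
        have hcO : Classical.choose hne ∈ O := Classical.choose_spec hne
        have heq : Classical.choose hne = b := Finset.card_le_one.mp hle _ hcO _ hbO
        rw [heq]; exact hbT
      · rw [if_neg hle]
        have hzO : S.1 O ∈ O := hS O hne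
        rw [dif_pos hzO]
        by_cases hacc : (gstrat T).2 O (S.1 O) = true
        · rw [if_pos hacc]
          simpa only [gstrat, decide_eq_true_eq] using hacc
        · rw [if_neg hacc]
          have hzT : S.1 O ∉ T := by
            simpa only [gstrat, decide_eq_true_eq] using hacc
          set z := S.1 O with hz
          have hcard' : (O.erase z).card = O.card - 1 := Finset.card_erase_of_mem hzO
          have hne' : (O.erase z).Nonempty := Finset.card_pos.mp (by omega)
          have hint : (O.erase z) ∩ T = O ∩ T := by
            rw [Finset.erase_inter, Finset.erase_eq_of_notMem]
            exact fun h => hzT (Finset.mem_of_mem_inter_right h)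
          exact (IH (O.erase z).card (by omega) (O.erase z) rfl hne').1 S hS
            (by rw [hint]; omega)

def pr1 : Fin 6 → ℕ := ![0,1,4,3,2,5]
def pr2 : Fin 6 → ℕ := ![0,1,3,5,4,2]
def pr1' : Fin 6 → ℕ := ![2,3,4,0,1,5]
def pr2'' : Fin 6 → ℕ := ![4,3,2,5,1,0]

/-- there is no ex-post equilibrium for the VAOV protocol over six
outcomes: there are no strategy maps `s1, s2` (assigning a valid full strategy to
each strict preference order, represented by an injective rank function) such
that for every pair of realized preference orders, each party's assigned strategy
is a best response to the other's in the induced full-information game starting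
from all six outcomes (party 1 proposing first). -/
theorem no_ex_post_equilibrium :
    ¬ ∃ s1 s2 : (Fin 6 → ℕ) → NegStrat (Fin 6),
      (∀ r : Fin 6 → ℕ, Function.Injective r → ValidStrat (s1 r) ∧ ValidStrat (s2 r)) ∧
      (∀ r1 r2 : Fin 6 → ℕ, Function.Injective r1 → Function.Injective r2 →
        (∀ T1 : NegStrat (Fin 6), ValidStrat T1 →
          r1 (play T1 (s2 r2) Finset.univ) ≤ r1 (play (s1 r1) (s2 r2) Finset.univ)) ∧
        (∀ T2 : NegStrat (Fin 6), ValidStrat T2 →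
          r2 (play (s1 r1) T2 Finset.univ) ≤ r2 (play (s1 r1) (s2 r2) Finset.univ))) := by
  intro ⟨s1, s2, hval, hBR⟩
  have hi1 : Function.Injective pr1 := by decide
  have hi2 : Function.Injective pr2 := by decide
  have hi1' : Function.Injective pr1' := by decide
  have hi2'' : Function.Injective pr2'' := by decide
  obtain ⟨hv1, -⟩ := hval pr1 hi1
  obtain ⟨-, hv2⟩ := hval pr2 hi2
  obtain ⟨hv1', -⟩ := hval pr1' hi1'
  obtain ⟨-, hv2''⟩ := hval pr2'' hi2''
  have huniv : (Finset.univ : Finset (Fin 6)).Nonempty := Finset.univ_nonempty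
  -- pair (pr1, pr2'') pins outcome to 3 (= o4)
  obtain ⟨h1a, h1b⟩ := hBR pr1 pr2'' hi1 hi2''
  have hy1 : 2 ≤ pr1 (play (s1 pr1) (s2 pr2'') Finset.univ) := by
    have hg := (guarantee {5,2,3,4} 6 Finset.univ (by decide) huniv).1 (s2 pr2'') hv2''
      (by decide)
    have hmin : ∀ z : Fin 6, z ∈ ({5,2,3,4} : Finset (Fin 6)) → 2 ≤ pr1 z := by decide
    exact le_trans (hmin _ hg) (h1a (gstrat {5,2,3,4}) (gstrat_valid _))
  have hy2 : 3 ≤ pr2'' (play (s1 pr1) (s2 pr2'') Finset.univ) := by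
    have hg := (guarantee {3,0,1} 6 Finset.univ (by decide) huniv).2 (s1 pr1) hv1
      (by decide)
    have hmin : ∀ z : Fin 6, z ∈ ({3,0,1} : Finset (Fin 6)) → 3 ≤ pr2'' z := by decide
    exact le_trans (hmin _ hg) (h1b (gstrat {3,0,1}) (gstrat_valid _))
  have hy : play (s1 pr1) (s2 pr2'') Finset.univ = 3 :=
    (show ∀ z : Fin 6, 2 ≤ pr1 z → 3 ≤ pr2'' z → z = 3 by decide) _ hy1 hy2
  -- pair (pr1, pr2): outcome is 3 (= o4)
  obtain ⟨h2a, h2b⟩ := hBR pr1 pr2 hi1 hi2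
  have hx5 : 5 ≤ pr2 (play (s1 pr1) (s2 pr2) Finset.univ) := by
    have h := h2b (s2 pr2'') hv2''
    rw [hy] at h
    exact le_trans (by decide) h
  have hx : play (s1 pr1) (s2 pr2) Finset.univ = 3 :=
    (show ∀ z : Fin 6, 5 ≤ pr2 z → z = 3 by decide) _ hx5
  -- pair (pr1', pr2): outcome is 2 (= o3)
  obtain ⟨h3a, h3b⟩ := hBR pr1' pr2 hi1' hi2
  have hx'1 : 2 ≤ pr1' (play (s1 pr1') (s2 pr2) Finset.univ) := by
    have hg := (guarantee {5,2,1,0} 6 Finset.univ (by decide) huniv).1 (s2 pr2) hv2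
      (by decide)
    have hmin : ∀ z : Fin 6, z ∈ ({5,2,1,0} : Finset (Fin 6)) → 2 ≤ pr1' z := by decide
    exact le_trans (hmin _ hg) (h3a (gstrat {5,2,1,0}) (gstrat_valid _))
  have hx'2 : 3 ≤ pr2 (play (s1 pr1') (s2 pr2) Finset.univ) := by
    have hg := (guarantee {3,4,2} 6 Finset.univ (by decide) huniv).2 (s1 pr1') hv1'
      (by decide)
    have hmin : ∀ z : Fin 6, z ∈ ({3,4,2} : Finset (Fin 6)) → 3 ≤ pr2 z := by decide
    exact le_trans (hmin _ hg) (h3b (gstrat {3,4,2}) (gstrat_valid _))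
  have hx' : play (s1 pr1') (s2 pr2) Finset.univ = 2 :=
    (show ∀ z : Fin 6, 2 ≤ pr1' z → 3 ≤ pr2 z → z = 2 by decide) _ hx'1 hx'2
  -- contradiction: player 1 with pr1 profitably deviates to s1 pr1'
  have hdev := h2a (s1 pr1') hv1'
  rw [hx, hx'] at hdev
  exact absurd hdev (by decide)
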